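/- For every fixed θ ∈ ℝ, the map p ↦ 𝒱_nav(p,θ) is differentiable at every point p ∈ ℝ² with ‖p − p_o‖ > r_o, and its gradient there equals ∇V_nav(p) + (I₂ − R(θ))ᵀ(p_d − p_o), where ∇V_nav(p) = p − p_d + ϱ·φ'(d_o(p))·(p − p_o)/‖p − p_o‖. -/

import Mathlib

open Real Filter
open scoped RealInnerProductSpace Topology Matrix

noncomputable section

/-- The Euclidean plane. -/
abbrev E2 : Type := EuclideanSpace ℝ (Fin 2)

/-- The planar rotation matrix `R(θ)`. -/
def RotM (θ : ℝ) : Matrix (Fin 2) (Fin 2) ℝ :=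
  !![Real.cos θ, -Real.sin θ; Real.sin θ, Real.cos θ]

/-- The matrix `Δ = [[0,-1],[1,0]]`. -/
def DeltaM : Matrix (Fin 2) (Fin 2) ℝ := !![0, -1; 1, 0]

/-- Reinterpret a plain vector as a point of the Euclidean plane. -/
def toE2 (v : Fin 2 → ℝ) : E2 := (WithLp.equiv 2 (Fin 2 → ℝ)).symm v

/-- Reinterpret a point of the Euclidean plane as a plain vector. -/
def fromE2 (p : E2) : Fin 2 → ℝ := WithLp.equiv 2 (Fin 2 → ℝ) p

/-- A `2×2` matrix acting on a point of the Euclidean plane. -/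
def mulV (M : Matrix (Fin 2) (Fin 2) ℝ) (p : E2) : E2 := toE2 (M.mulVec (fromE2 p))

/-- The barrier function `φ`. -/
def phi (rs z : ℝ) : ℝ := if z ≤ rs then (z - rs) ^ 2 * Real.log (rs / z) else 0

/-- The derivative `φ'` of the barrier function. -/
def phi' (rs z : ℝ) : ℝ :=
  if z ≤ rs then 2 * (z - rs) * Real.log (rs / z) - (z - rs) ^ 2 / z else 0

/-- Distance to the obstacle, `d_o(p) = ‖p - p_o‖ - r_o`. -/
def dO (po : E2) (ro : ℝ) (p : E2) : ℝ := ‖p - po‖ - ro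

/-- The free space `X_p = {p : ‖p - p_o‖ ≥ r_o + ε}`. -/
def Xp (po : E2) (ro ε : ℝ) : Set E2 := {p | ro + ε ≤ ‖p - po‖}

/-- The navigation function `V_nav`. -/
def Vnav (po pd : E2) (ro ϱ rs : ℝ) (p : E2) : ℝ :=
  (1 / 2) * ‖p - pd‖ ^ 2 + ϱ * phi rs (dO po ro p)

/-- The gradient `∇V_nav(p) = p - p_d + ϱ φ'(d_o(p)) (p - p_o)/‖p - p_o‖`. -/
def gradVnav (po pd : E2) (ro ϱ rs : ℝ) (p : E2) : E2 :=
  (p - pd) + ((ϱ * phi' rs (dO po ro p)) / ‖p - po‖) • (p - po)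

/-- The transformation `T(p,θ) = p_o + R(θ)(p - p_o)`. -/
def Tmap (po : E2) (p : E2) (θ : ℝ) : E2 := po + mulV (RotM θ) (p - po)

/-- The modified navigation function `𝒱_nav`. -/
def Vnav2 (po pd : E2) (ro ϱ rs γθ : ℝ) (p : E2) (θ : ℝ) : ℝ :=
  (1 / 2) * ‖Tmap po p θ - pd‖ ^ 2 + ϱ * phi rs (dO po ro p) + (γθ / 2) * θ ^ 2

/-- The map `σ(θ) = (I₂ - R(θ))ᵀ (p_o - p_d)`. -/
def sigmaFn (po pd : E2) (θ : ℝ) : E2 := mulV ((1 - RotM θ)ᵀ) (po - pd)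

lemma mulV_sub (M : Matrix (Fin 2) (Fin 2) ℝ) (a b : E2) : mulV M (a - b) = mulV M a - mulV M b := by
  ext i; fin_cases i <;> simp [mulV, toE2, fromE2, Matrix.mulVec_sub] <;> ring

lemma mulV_matrix_sub (A B : Matrix (Fin 2) (Fin 2) ℝ) (v : E2) :
    mulV (A - B) v = mulV A v - mulV B v := by
  ext i; fin_cases i <;> simp [mulV, toE2, fromE2, Matrix.sub_mulVec] <;> ring

lemma mulV_mulV (M N : Matrix (Fin 2) (Fin 2) ℝ) (x : E2) : mulV M (mulV N x) = mulV (M * N) x := by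
  ext i; fin_cases i <;> simp [mulV, toE2, fromE2, Matrix.mulVec_mulVec, Matrix.mul_apply, Fin.sum_univ_two] <;> ring

lemma mulV_one (x : E2) : mulV 1 x = x := by
  ext i; simp [mulV, toE2, fromE2]

lemma RotM_transpose (θ : ℝ) : (RotM θ)ᵀ = !![Real.cos θ, Real.sin θ; -Real.sin θ, Real.cos θ] := by
  ext i j; fin_cases i <;> fin_cases j <;> simp [RotM]

lemma RotM_mul_transpose (θ : ℝ) : RotM θ * (RotM θ)ᵀ = 1 := by
  rw [RotM_transpose, RotM, Matrix.mul_fin_two, Matrix.one_fin_two]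
  ext i j
  fin_cases i <;> fin_cases j <;> simp <;> nlinarith [sin_sq_add_cos_sq θ]

lemma norm_mulV_rot (θ : ℝ) (x : E2) : ‖mulV (RotM θ) x‖ = ‖x‖ := by
  rw [EuclideanSpace.norm_eq, EuclideanSpace.norm_eq]
  congr 1
  simp [Fin.sum_univ_two, mulV, toE2, fromE2, RotM, Matrix.mulVec, dotProduct, Matrix.vecHead, Matrix.vecTail]
  nlinarith [sin_sq_add_cos_sq θ]

lemma phi_hasDerivAt {rs z : ℝ} (hrs : 0 < rs) (hz : 0 < z) :
    HasDerivAt (phi rs) (phi' rs z) z := by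
  rcases lt_trichotomy z rs with h | h | h
  · rw [show phi' rs z = 2 * (z - rs) * Real.log (rs / z) - (z - rs) ^ 2 / z from if_pos h.le]
    have key : HasDerivAt (fun z => (z - rs) ^ 2 * Real.log (rs / z))
        (2 * (z - rs) * Real.log (rs / z) - (z - rs) ^ 2 / z) z := by
      have h1 : HasDerivAt (fun z : ℝ => (z - rs) ^ 2) (2 * (z - rs)) z := by
        have h1' := (((hasDerivAt_id z).sub_const rs).pow 2)
        simp at h1'
        exact h1'
      have h2 : HasDerivAt (fun z : ℝ => Real.log (rs / z)) (-(1 / z)) z := by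
        have h3 : HasDerivAt (fun z : ℝ => Real.log rs - Real.log z) (0 - 1 / z) z := by
          have h3' := (hasDerivAt_const z (Real.log rs)).sub (Real.hasDerivAt_log hz.ne')
          refine h3'.congr_deriv ?_
          ring
        have h4 : HasDerivAt (fun z : ℝ => Real.log (rs / z)) (0 - 1 / z) z := by
          refine h3.congr_of_eventuallyEq ?_
          filter_upwards [eventually_gt_nhds hz] with w hw
          rw [Real.log_div hrs.ne' hw.ne']
        simpa using h4
      have := h1.mul h2
      refine this.congr_deriv ?_
      ring
    refine key.congr_of_eventuallyEq ?_
    filter_upwards [eventually_lt_nhds h] with w hw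
    rw [phi, if_pos hw.le]
  · have h0 : phi' rs z = 0 := by simp [phi', h]
    rw [h0, hasDerivAt_iff_tendsto_slope]
    have hb : ∀ᶠ w in 𝓝[≠] z, ‖slope (phi rs) z w‖ ≤ |w - z| * |Real.log (rs / w)| := by
      filter_upwards [self_mem_nhdsWithin,
        eventually_nhdsWithin_of_eventually_nhds (eventually_gt_nhds hz)] with w hne hwpos
      have hneq : w ≠ z := hne
      have hpos : (0:ℝ) < |w - z| := abs_pos.mpr (sub_ne_zero.mpr hneq)
      have hphiz : phi rs z = 0 := by simp [phi, h]
      have hineq : |phi rs w| ≤ (w - z) ^ 2 * |Real.log (rs / w)| := by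
        by_cases hw : w ≤ rs
        · rw [phi]; rw [if_pos hw, abs_mul, abs_of_nonneg (sq_nonneg _), h]
        · rw [phi]; rw [if_neg hw]
          simp only [abs_zero]
          positivity
      rw [slope_def_field, hphiz, sub_zero, norm_div, Real.norm_eq_abs, Real.norm_eq_abs,
        div_le_iff₀ hpos]
      calc |phi rs w| ≤ (w - z) ^ 2 * |Real.log (rs / w)| := hineq
        _ = |w - z| * |Real.log (rs / w)| * |w - z| := by rw [← sq_abs]; ring
    have hc : ContinuousAt (fun w : ℝ => |w - z| * |Real.log (rs / w)|) z := by
      apply ContinuousAt.mul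
      · exact (continuous_abs.comp (continuous_id.sub continuous_const)).continuousAt
      · apply ContinuousAt.abs
        have hne : rs / z ≠ 0 := by positivity
        exact (Real.continuousAt_log hne).comp (continuousAt_const.div continuousAt_id hz.ne')
    have htend : Tendsto (fun w : ℝ => |w - z| * |Real.log (rs / w)|) (𝓝 z) (𝓝 0) := by
      have := hc.tendsto
      simpa using this
    exact squeeze_zero_norm' hb (htend.mono_left nhdsWithin_le_nhds)
  · rw [show phi' rs z = 0 from if_neg (not_le.mpr h)]
    refine (hasDerivAt_const z 0).congr_of_eventuallyEq ?_
    filter_upwards [eventually_gt_nhds h] with w hw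
    rw [phi, if_neg (not_le.mpr hw)]

/-- For every fixed `θ`, the map `p ↦ 𝒱_nav(p,θ)` is differentiable at every
point `p` with `‖p - p_o‖ > r_o`, with gradient `∇V_nav(p) + (I₂ - R(θ))ᵀ(p_d - p_o)`. -/
theorem statement_0
    (po pd : E2) (ro ε ϱ rs γθ : ℝ)
    (hro : 0 < ro) (hε : 0 < ε) (hϱ : 0 < ϱ) (hγθ : 0 < γθ)
    (hpd : pd ∈ Xp po ro ε) (hrs_lb : ε < rs) (hrs_ub : rs < dO po ro pd)
    (θ : ℝ) (p : E2) (hp : ro < ‖p - po‖) :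
    HasGradientAt (fun q => Vnav2 po pd ro ϱ rs γθ q θ)
      (gradVnav po pd ro ϱ rs p + mulV ((1 - RotM θ)ᵀ) (pd - po)) p := by
  set c : E2 := po + mulV ((RotM θ)ᵀ) (pd - po) with hc
  have hnorm : (0:ℝ) < ‖p - po‖ := lt_trans hro hp
  have hrs0 : (0:ℝ) < rs := lt_trans hε hrs_lb
  -- rewrite the function
  have norm_Tmap : ∀ q : E2, ‖Tmap po q θ - pd‖ = ‖q - c‖ := by
    intro q
    have hqc : q - c = (q - po) - mulV ((RotM θ)ᵀ) (pd - po) := by rw [hc]; abel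
    have e1 : Tmap po q θ - pd = mulV (RotM θ) (q - c) := by
      rw [hqc, mulV_sub, mulV_mulV, RotM_mul_transpose, mulV_one, Tmap]
      abel
    rw [e1, norm_mulV_rot]
  have hfun : (fun q => Vnav2 po pd ro ϱ rs γθ q θ)
      = fun q => (1/2) * ‖q - c‖^2 + ϱ * phi rs (dO po ro q) + (γθ/2) * θ^2 :=
    funext fun q => by rw [Vnav2, norm_Tmap q]
  -- pieces
  have G1 : HasFDerivAt (fun q : E2 => (1/2) * ‖q - c‖^2) (innerSL ℝ (p - c)) p := by
    have h2 := (((hasFDerivAt_id p).sub_const c).norm_sq).const_mul (1/2 : ℝ)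
    refine h2.congr_fderiv ?_
    ext y
    simp [two_smul]
    ring
  have Gn : HasFDerivAt (fun q : E2 => ‖q - po‖) (‖p - po‖⁻¹ • innerSL ℝ (p - po)) p := by
    have hsq := ((hasFDerivAt_id p).sub_const po).norm_sq
    have hsqrt : HasDerivAt Real.sqrt (1 / (2 * Real.sqrt (‖p - po‖^2))) (‖p - po‖^2) :=
      Real.hasDerivAt_sqrt (by positivity)
    have hcomp := hsqrt.comp_hasFDerivAt p hsq
    simp only [id_eq, Function.comp_def] at hcomp
    have heq : (fun q : E2 => Real.sqrt (‖q - po‖^2)) = fun q : E2 => ‖q - po‖ :=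
      funext fun q => Real.sqrt_sq (norm_nonneg _)
    rw [heq] at hcomp
    refine hcomp.congr_fderiv ?_
    rw [Real.sqrt_sq (norm_nonneg _)]
    ext y
    simp [two_smul]
    field_simp
    ring
  have hdO : HasFDerivAt (fun q : E2 => dO po ro q) (‖p - po‖⁻¹ • innerSL ℝ (p - po)) p :=
    Gn.sub_const ro
  have hz : (0:ℝ) < dO po ro p := by rw [dO]; linarith
  have hphi := (phi_hasDerivAt hrs0 hz).comp_hasFDerivAt p hdO
  have G2 := hphi.const_mul ϱ
  have G3 : HasFDerivAt (fun _ : E2 => (γθ/2) * θ^2) (0 : E2 →L[ℝ] ℝ) p := hasFDerivAt_const _ _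
  have Gsum := (G1.add G2).add G3
  rw [hasGradientAt_iff_hasFDerivAt, hfun]
  refine Gsum.congr_fderiv ?_
  -- identify the dual vector
  have hvec : gradVnav po pd ro ϱ rs p + mulV ((1 - RotM θ)ᵀ) (pd - po)
      = (p - c) + ((ϱ * phi' rs (dO po ro p)) / ‖p - po‖) • (p - po) := by
    have h1 : mulV ((1 - RotM θ)ᵀ) (pd - po) = (pd - po) - mulV ((RotM θ)ᵀ) (pd - po) := by
      rw [Matrix.transpose_sub, Matrix.transpose_one, mulV_matrix_sub, mulV_one]
    rw [gradVnav, h1, hc]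
    abel
  rw [hvec]
  ext y
  simp [InnerProductSpace.toDual_apply_apply, inner_add_left, real_inner_smul_left]
  ring
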